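/- Let G be a finite abelian p-group and A a group of automorphisms of G with gcd(|A|, p) = 1. If a₁, a₂ ∈ A commute, a₂ centralizes [G,a₁], and a₁ centralizes [G,a₂], then [G,a₁]·[G,a₂] ≤ [G, a₁a₂]. -/

import Mathlib

section Aux

variable {G : Type*} [CommGroup G]

/-- The commutator map `g ↦ g⁻¹ * a g`, a homomorphism since `G` is abelian. -/
def comMap (a : MulAut G) : G →* G where
  toFun g := g⁻¹ * a g
  map_one' := by simp
  map_mul' g h := by
    simp only [map_mul, mul_inv_rev]
    simp [mul_assoc, mul_comm, mul_left_comm]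

lemma comMap_apply (a : MulAut G) (g : G) : comMap a g = g⁻¹ * a g := rfl

lemma closure_eq_range (a : MulAut G) :
    Subgroup.closure {x : G | ∃ g : G, x = g⁻¹ * a g} = (comMap a).range := by
  have h : {x : G | ∃ g : G, x = g⁻¹ * a g} = Set.range (comMap a) := by
    ext x
    simp [comMap_apply, Set.range, eq_comm]
  rw [h, ← MonoidHom.coe_range, Subgroup.closure_eq]

lemma apply_mem_range (a : MulAut G) {k : G} (hk : k ∈ (comMap a).range) :
    a k ∈ (comMap a).range := by
  obtain ⟨g, rfl⟩ := hk
  exact ⟨a g, by simp [comMap_apply]⟩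

lemma pow_apply_fixed (a : MulAut G) {k : G} (hk : a k = k) (i : ℕ) :
    (a ^ i) k = k := by
  induction i with
  | zero => simp
  | succ n ih => rw [pow_succ, MulAut.mul_apply, hk, ih]

lemma key_surj {p : ℕ} [Fact p.Prime] [Finite G] (hG : IsPGroup p G) (a : MulAut G)
    (hcop : (orderOf a).Coprime p) {h : G} (hh : h ∈ (comMap a).range) :
    ∃ k ∈ (comMap a).range, k⁻¹ * a k = h := by
  set H : Subgroup G := (comMap a).range with hH
  set N := orderOf a with hN
  -- the "norm" map
  set π : G →* G := ∏ i ∈ Finset.range N, ((a ^ i : MulAut G) : G →* G) with hπ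
  have hπ_apply : ∀ x : G, π x = ∏ i ∈ Finset.range N, (a ^ i) x := by
    intro x
    rw [hπ, MonoidHom.finset_prod_apply]
    rfl
  -- π kills the range of comMap
  have hπ_range : ∀ x ∈ H, π x = 1 := by
    rintro x ⟨g, rfl⟩
    rw [hπ_apply]
    have : ∀ i : ℕ, (a ^ i) (comMap a g) = (a ^ (i + 1)) g / (a ^ i) g := by
      intro i
      rw [comMap_apply, map_mul, map_inv, pow_succ, MulAut.mul_apply]
      rw [div_eq_mul_inv, mul_comm]
    simp_rw [this]
    rw [Finset.prod_range_div (fun i => (a ^ i) g) N]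
    simp [hN, pow_orderOf_eq_one a]
  -- fixed points in H are trivial
  have hfix : ∀ k ∈ H, a k = k → k = 1 := by
    intro k hk hak
    have h1 : π k = k ^ N := by
      rw [hπ_apply]
      simp [pow_apply_fixed a hak]
    have h2 : k ^ N = 1 := by rw [← h1, hπ_range k hk]
    obtain ⟨n, hn⟩ := hG k
    have d1 : orderOf k ∣ N := orderOf_dvd_of_pow_eq_one h2
    have d2 : orderOf k ∣ p ^ n := orderOf_dvd_of_pow_eq_one hn
    have : orderOf k ∣ 1 := by
      have := Nat.dvd_gcd d1 d2
      rwa [Nat.Coprime.gcd_eq_one (hcop.pow_right n)] at this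
    rw [← orderOf_eq_one_iff]
    exact Nat.dvd_one.mp this
  -- restriction of comMap to H
  have hmaps : ∀ x : H, (comMap a).domRestrict H x ∈ H := by
    intro x
    rw [MonoidHom.restrict_apply, comMap_apply]
    exact mul_mem (inv_mem x.2) (apply_mem_range a x.2)
  set ψ : H →* H := ((comMap a).domRestrict H).codRestrict H hmaps with hψ
  have hinj : Function.Injective ψ := by
    rw [injective_iff_map_eq_one]
    intro x hx
    have hx' : comMap a (x : G) = 1 := congrArg Subtype.val hx
    rw [comMap_apply, inv_mul_eq_one] at hx'
    exact Subtype.ext (hfix x x.2 hx'.symm)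
  have hsurj : Function.Surjective ψ := Finite.injective_iff_surjective.mp hinj
  obtain ⟨k, hk⟩ := hsurj ⟨h, hh⟩
  refine ⟨(k : G), k.2, ?_⟩
  have : comMap a (k : G) = h := congrArg Subtype.val hk
  rwa [comMap_apply] at this

end Aux

theorem stmt_9 (p : ℕ) [Fact p.Prime] (G : Type*) [CommGroup G] [Finite G]
    (hG : IsPGroup p G) (a₁ a₂ : MulAut G)
    (h₁ : (orderOf a₁).Coprime p) (h₂ : (orderOf a₂).Coprime p)
    (hcomm : a₁ * a₂ = a₂ * a₁)
    (hc₂ : ∀ x ∈ Subgroup.closure {x : G | ∃ g : G, x = g⁻¹ * a₁ g}, a₂ x = x)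
    (hc₁ : ∀ x ∈ Subgroup.closure {x : G | ∃ g : G, x = g⁻¹ * a₂ g}, a₁ x = x) :
    Subgroup.closure {x : G | ∃ g : G, x = g⁻¹ * a₁ g} ⊔
      Subgroup.closure {x : G | ∃ g : G, x = g⁻¹ * a₂ g} ≤
      Subgroup.closure {x : G | ∃ g : G, x = g⁻¹ * (a₁ * a₂) g} := by
  rw [closure_eq_range a₁] at hc₂ ⊢
  rw [closure_eq_range a₂] at hc₁ ⊢
  rw [closure_eq_range (a₁ * a₂)]
  apply sup_le
  · intro h hh
    obtain ⟨k, hk, hkh⟩ := key_surj hG a₁ h₁ hh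
    refine ⟨k, ?_⟩
    rw [comMap_apply, MulAut.mul_apply, hc₂ k hk, hkh]
  · intro h hh
    obtain ⟨k, hk, hkh⟩ := key_surj hG a₂ h₂ hh
    refine ⟨k, ?_⟩
    rw [comMap_apply, hcomm, MulAut.mul_apply, hc₁ k hk, hkh]
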